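/- For every block configuration B in 𝔽₂^d, the cyclic transversal polytope CTP[B] equals the convex hull of the set of all 0/1-vectors in the transversal polytope TP[B] that satisfy all lifted odd-set inequalities associated with the standard basis vectors e_1, …, e_d of 𝔽₂^d (i.e., all LOS inequalities with η ∈ {e_1, …, e_d} and I ⊆ [n] of odd cardinality). -/

import Mathlib

open scoped Classical

/-- The field `𝔽₂^d`, represented as functions `Fin d → ZMod 2`. -/
abbrev F2 (d : ℕ) : Type := Fin d → ZMod 2

/-- A cyclic transversal of a block configuration `B`. -/
def IsCyclicTransversal {d n : ℕ} (B : Fin n → Set (F2 d)) (ξ : Fin n → F2 d) : Prop :=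
  (∀ i, ξ i ∈ B i) ∧ (∑ i, ξ i) = 0

/-- The incidence vector of a transversal. -/
noncomputable def incVec {d n : ℕ} (ξ : Fin n → F2 d) : Fin n → F2 d → ℝ :=
  fun i ω => if ξ i = ω then 1 else 0

/-- The cyclic transversal polytope of a block configuration. -/
noncomputable def CTP {d n : ℕ} (B : Fin n → Set (F2 d)) : Set (Fin n → F2 d → ℝ) :=
  convexHull ℝ (incVec '' { ξ | IsCyclicTransversal B ξ })

/-- The transversal polytope of a block configuration. -/
def TP {d n : ℕ} (B : Fin n → Set (F2 d)) : Set (Fin n → F2 d → ℝ) :=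
  { x | (∀ i ω, 0 ≤ x i ω) ∧ (∀ i ω, ω ∉ B i → x i ω = 0) ∧ ∀ i, (∑ ω : F2 d, x i ω) = 1 }

/-- The size of a block configuration. -/
noncomputable def blockSize {d n : ℕ} (B : Fin n → Set (F2 d)) : ℕ := ∑ i, (B i).ncard

/-- The rank of a block configuration. -/
noncomputable def blockRank {d n : ℕ} (B : Fin n → Set (F2 d)) : ℕ :=
  Module.finrank (ZMod 2) (Submodule.span (ZMod 2) (⋃ i, B i))

/-- Two sets of real vectors are affinely isomorphic. -/
def AffIso {α β : Type*} [AddCommGroup α] [Module ℝ α] [AddCommGroup β] [Module ℝ β]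
    (P : Set α) (Q : Set β) : Prop :=
  ∃ f : α →ᵃ[ℝ] β, Set.InjOn f P ∧ f '' P = Q

/-- The left-hand side of the lifted odd-set (LOS) inequality associated with `η` and `I`. -/
noncomputable def losLHS {d n : ℕ} (B : Fin n → Set (F2 d)) (η : F2 d) (I : Finset (Fin n))
    (x : Fin n → F2 d → ℝ) : ℝ :=
  (∑ i ∈ I, ∑ ω ∈ Finset.univ.filter (fun ω : F2 d => ω ∈ B i ∧ (∑ j, η j * ω j) = 0), x i ω) +
  (∑ i ∈ Iᶜ, ∑ ω ∈ Finset.univ.filter (fun ω : F2 d => ω ∈ B i ∧ (∑ j, η j * ω j) = 1), x i ω)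


section statement10aux

variable {d n : ℕ}

lemma sum_single_mul (j : Fin d) (ω : F2 d) :
    (∑ k, (Pi.single j 1 : F2 d) k * ω k) = ω j := by
  rw [Finset.sum_eq_single j]
  · simp
  · intro k _ hk; simp [Pi.single_apply, hk]
  · simp

lemma zmod2_ne_zero {a : ZMod 2} (h : a ≠ 0) : a = 1 := by revert a; decide

lemma zmod2_ne_one {a : ZMod 2} (h : a ≠ 1) : a = 0 := by revert a; decide

lemma odd_of_cast_one {m : ℕ} (h : (m : ZMod 2) = 1) : Odd m := by
  rw [Nat.odd_iff]
  rcases Nat.mod_two_eq_zero_or_one m with h2 | h2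
  · exfalso
    have : ((m % 2 : ℕ) : ZMod 2) = 1 := by rwa [ZMod.natCast_mod]
    rw [h2] at this; simp at this
  · exact h2

lemma cast_one_of_odd {m : ℕ} (h : Odd m) : (m : ZMod 2) = 1 := by
  obtain ⟨k, rfl⟩ := h
  push_cast
  rw [show (2 : ZMod 2) = 0 from rfl]
  ring

lemma incVec_sum_filter (ξ : Fin n → F2 d) (i : Fin n) (s : Finset (F2 d)) :
    (∑ ω ∈ s, incVec ξ i ω) = if ξ i ∈ s then 1 else 0 := by
  simp [incVec, Finset.sum_ite_eq]

lemma losLHS_incVec (B : Fin n → Set (F2 d)) (j : Fin d) (I : Finset (Fin n))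
    (ξ : Fin n → F2 d) (hξ : ∀ i, ξ i ∈ B i) :
    losLHS B (Pi.single j 1) I (incVec ξ) =
      (∑ i ∈ I, if (ξ i) j = 0 then (1 : ℝ) else 0) +
      (∑ i ∈ Iᶜ, if (ξ i) j = 1 then (1 : ℝ) else 0) := by
  unfold losLHS
  congr 1
  · refine Finset.sum_congr rfl fun i _ => ?_
    rw [incVec_sum_filter]
    simp [Finset.mem_filter, sum_single_mul, hξ i]
  · refine Finset.sum_congr rfl fun i _ => ?_
    rw [incVec_sum_filter]
    simp [Finset.mem_filter, sum_single_mul, hξ i]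

lemma key_set_eq (B : Fin n → Set (F2 d)) :
    incVec '' { ξ : Fin n → F2 d | IsCyclicTransversal B ξ } =
      { x : Fin n → F2 d → ℝ | x ∈ TP B ∧
        (∀ i ω, x i ω = 0 ∨ x i ω = 1) ∧
        ∀ (j : Fin d) (I : Finset (Fin n)), Odd I.card →
          1 ≤ losLHS B (Pi.single j 1) I x } := by
  ext x
  constructor
  · rintro ⟨ξ, ⟨hmem, hcyc⟩, rfl⟩
    refine ⟨⟨?_, ?_, ?_⟩, ?_, ?_⟩
    · intro i ω; unfold incVec; split <;> norm_num
    · intro i ω hω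
      unfold incVec
      have : ξ i ≠ ω := fun h => hω (h ▸ hmem i)
      simp [this]
    · intro i; rw [incVec_sum_filter]; simp
    · intro i ω; unfold incVec; split <;> simp
    · intro j I hI
      rw [losLHS_incVec B j I ξ hmem]
      -- there must be a contributing index
      have hex : (∃ i ∈ I, (ξ i) j = 0) ∨ (∃ i ∈ Iᶜ, (ξ i) j = 1) := by
        by_contra hcon
        push_neg at hcon
        obtain ⟨h1, h2⟩ := hcon
        have hsum : (∑ i, (ξ i) j) = (I.card : ZMod 2) := by
          rw [← Finset.sum_add_sum_compl I]
          have e1 : (∑ i ∈ I, (ξ i) j) = ∑ i ∈ I, 1 :=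
            Finset.sum_congr rfl fun i hi => zmod2_ne_zero (h1 i hi)
          have e2 : (∑ i ∈ Iᶜ, (ξ i) j) = 0 :=
            Finset.sum_eq_zero fun i hi => zmod2_ne_one (h2 i hi)
          rw [e1, e2, Finset.sum_const, add_zero]
          simp
        have hzero : (∑ i, (ξ i) j) = 0 := by
          have := congrFun hcyc j
          simpa [Finset.sum_apply] using this
        rw [hzero, cast_one_of_odd hI] at hsum
        exact one_ne_zero hsum.symm
      have nn1 : (0 : ℝ) ≤ ∑ i ∈ I, if (ξ i) j = 0 then (1 : ℝ) else 0 :=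
        Finset.sum_nonneg fun i _ => by split <;> norm_num
      have nn2 : (0 : ℝ) ≤ ∑ i ∈ Iᶜ, if (ξ i) j = 1 then (1 : ℝ) else 0 :=
        Finset.sum_nonneg fun i _ => by split <;> norm_num
      rcases hex with ⟨i, hi, hij⟩ | ⟨i, hi, hij⟩
      · have : (1 : ℝ) ≤ ∑ i ∈ I, if (ξ i) j = 0 then (1 : ℝ) else 0 := by
          have := Finset.single_le_sum (f := fun i => if (ξ i) j = 0 then (1 : ℝ) else 0)
            (fun i _ => by split <;> norm_num) hi
          simpa [hij] using this
        linarith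
      · have : (1 : ℝ) ≤ ∑ i ∈ Iᶜ, if (ξ i) j = 1 then (1 : ℝ) else 0 := by
          have := Finset.single_le_sum (f := fun i => if (ξ i) j = 1 then (1 : ℝ) else 0)
            (fun i _ => by split <;> norm_num) hi
          simpa [hij] using this
        linarith
  · rintro ⟨⟨hnn, hzero, hsum⟩, h01, hlos⟩
    have h1 : ∀ i, ∃ ω, x i ω = 1 := by
      intro i
      by_contra hcon
      push_neg at hcon
      have : (∑ ω : F2 d, x i ω) = 0 :=
        Finset.sum_eq_zero fun ω _ => (h01 i ω).resolve_right (hcon ω)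
      rw [hsum i] at this
      exact one_ne_zero this
    set ξ : Fin n → F2 d := fun i => Classical.choose (h1 i) with hξ
    have hx1 : ∀ i, x i (ξ i) = 1 := fun i => Classical.choose_spec (h1 i)
    have hx0 : ∀ i ω, ω ≠ ξ i → x i ω = 0 := by
      intro i ω hne
      have herase : (∑ ω ∈ Finset.univ.erase (ξ i), x i ω) = 0 := by
        have := Finset.add_sum_erase Finset.univ (x i) (Finset.mem_univ (ξ i))
        rw [hsum i, hx1 i] at this
        linarith
      have := (Finset.sum_eq_zero_iff_of_nonneg fun ω _ => hnn i ω).mp herase ω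
        (Finset.mem_erase.mpr ⟨hne, Finset.mem_univ ω⟩)
      exact this
    have hxeq : x = incVec ξ := by
      funext i ω
      unfold incVec
      by_cases h : ξ i = ω
      · subst h; simp [hx1 i]
      · simp [h, hx0 i ω (fun hh => h hh.symm)]
    have hmem : ∀ i, ξ i ∈ B i := by
      intro i
      by_contra hcon
      have := hzero i (ξ i) hcon
      rw [hx1 i] at this
      exact one_ne_zero this
    refine ⟨ξ, ⟨hmem, ?_⟩, hxeq.symm⟩
    funext j
    show (∑ i, ξ i) j = (0 : F2 d) j
    rw [Finset.sum_apply]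
    simp only [Pi.zero_apply]
    by_contra hne
    have hone : (∑ i, (ξ i) j) = 1 := zmod2_ne_zero hne
    set I : Finset (Fin n) := Finset.univ.filter (fun i => (ξ i) j = 1) with hI
    have hcard : (∑ i, (ξ i) j) = (I.card : ZMod 2) := by
      rw [← Finset.sum_filter_add_sum_filter_not Finset.univ (fun i => (ξ i) j = 1)]
      have e1 : (∑ i ∈ Finset.univ.filter (fun i => (ξ i) j = 1), (ξ i) j)
          = ∑ i ∈ I, 1 := Finset.sum_congr rfl fun i hi => (Finset.mem_filter.mp hi).2
      have e2 : (∑ i ∈ Finset.univ.filter (fun i => ¬ (ξ i) j = 1), (ξ i) j) = 0 :=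
        Finset.sum_eq_zero fun i hi => zmod2_ne_one (Finset.mem_filter.mp hi).2
      rw [e1, e2, Finset.sum_const, add_zero]
      simp
    have hodd : Odd I.card := odd_of_cast_one (by rw [← hcard, hone])
    have := hlos j I hodd
    rw [hxeq, losLHS_incVec B j I ξ hmem] at this
    have z1 : (∑ i ∈ I, if (ξ i) j = 0 then (1 : ℝ) else 0) = 0 :=
      Finset.sum_eq_zero fun i hi => by
        have h1 : (ξ i) j = 1 := (Finset.mem_filter.mp hi).2
        rw [if_neg (by rw [h1]; decide)]
    have z2 : (∑ i ∈ Iᶜ, if (ξ i) j = 1 then (1 : ℝ) else 0) = 0 :=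
      Finset.sum_eq_zero fun i hi => by
        have h1 : ¬ (ξ i) j = 1 := by
          have := Finset.mem_compl.mp hi
          simpa [hI] using this
        rw [if_neg h1]
    rw [z1, z2] at this
    linarith

end statement10aux

/-- `CTP[B]` is the convex hull of the 0/1-points of `TP[B]` satisfying the
LOS inequalities associated with the standard basis vectors `e₁, …, e_d` of `𝔽₂^d`. -/
theorem statement10 (d n : ℕ) (hn : 2 ≤ n) (B : Fin n → Set (F2 d))
    (hB : ∀ i, (B i).Nonempty) :
    CTP B = convexHull ℝ { x : Fin n → F2 d → ℝ | x ∈ TP B ∧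
      (∀ i ω, x i ω = 0 ∨ x i ω = 1) ∧
      ∀ (j : Fin d) (I : Finset (Fin n)), Odd I.card →
        1 ≤ losLHS B (Pi.single j 1) I x } := by
  unfold CTP
  rw [key_set_eq B]
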